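/- For h(x) = (x+1)(1+1/x)^x, the inequality h(x) - h(x-1) ≥ e holds for all real x ≥ 3. -/

import Mathlib

open Real

noncomputable def h (x : ℝ) : ℝ := (x + 1) * (1 + 1 / x) ^ x

set_option maxHeartbeats 2000000 in
private theorem key_poly' (t : ℝ) (h0 : 0 ≤ t) (h1 : t ≤ 1/2) :
    1 ≤ (1+t) * (1 - (t/2 - t^2/3 + t^3/4 - t^4/5 + t^5/6)) *
      (1 - (t/2 - t^2/3 + t^3/4 - t^4/5 + t^5/6) + (t/2 - t^2/3 + t^3/4 - t^4/5 + t^5/6)^2/2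
        - (t/2 - t^2/3 + t^3/4 - t^4/5 + t^5/6)^3/6 - 5*(t/2 - t^2/3 + t^3/4 - t^4/5 + t^5/6)^4/96) := by
  have h2 : (0:ℝ) ≤ 2*t := by linarith
  have h3 : (0:ℝ) ≤ 1-2*t := by linarith
  have key : (1+t) * (1 - (t/2 - t^2/3 + t^3/4 - t^4/5 + t^5/6)) *
      (1 - (t/2 - t^2/3 + t^3/4 - t^4/5 + t^5/6) + (t/2 - t^2/3 + t^3/4 - t^4/5 + t^5/6)^2/2
        - (t/2 - t^2/3 + t^3/4 - t^4/5 + t^5/6)^3/6 - 5*(t/2 - t^2/3 + t^3/4 - t^4/5 + t^5/6)^4/96) - 1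
      = (1/96 : ℝ) * (2*t)^2 * (1-2*t)^24 + (47/192 : ℝ) * (2*t)^3 * (1-2*t)^23 + (338807/122880 : ℝ) * (2*t)^4 * (1-2*t)^22 + (9736607/491520 : ℝ) * (2*t)^5 * (1-2*t)^21 + (2704891111/26542080 : ℝ) * (2*t)^6 * (1-2*t)^20 + (8482869607/21233664 : ℝ) * (2*t)^7 * (1-2*t)^19 + (3948864049781/3185049600 : ℝ) * (2*t)^8 * (1-2*t)^18 + (19898640189013/6370099200 : ℝ) * (2*t)^9 * (1-2*t)^17 + (248478028342579/38220595200 : ℝ) * (2*t)^10 * (1-2*t)^16 + (576421343691953/50960793600 : ℝ) * (2*t)^11 * (1-2*t)^15 + (5635160943270823/339738624000 : ℝ) * (2*t)^12 * (1-2*t)^14 + (84011937775335203/4076863488000 : ℝ) * (2*t)^13 * (1-2*t)^13 + (59111443939239671/2717908992000 : ℝ) * (2*t)^14 * (1-2*t)^12 + (70697185176348013/3623878656000 : ℝ) * (2*t)^15 * (1-2*t)^11 + (1614147837650343133/108716359680000 : ℝ) * (2*t)^16 * (1-2*t)^10 + (346048880100633953/36238786560000 : ℝ) * (2*t)^17 *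 (1-2*t)^9 + (13840764853770537/2684354560000 : ℝ) * (2*t)^18 * (1-2*t)^8 + (83882750842145173/36238786560000 : ℝ) * (2*t)^19 * (1-2*t)^7 + (20586766178659129/24159191040000 : ℝ) * (2*t)^20 * (1-2*t)^6 + (677191995777101/2684354560000 : ℝ) * (2*t)^21 * (1-2*t)^5 + (2821849340762479/48318382080000 : ℝ) * (2*t)^22 * (1-2*t)^4 + (326540317970749/32212254720000 : ℝ) * (2*t)^23 * (1-2*t)^3 + (26479252195409/21474836480000 : ℝ) * (2*t)^24 * (1-2*t)^2 + (5980802132269/64424509440000 : ℝ) * (2*t)^25 * (1-2*t)^1 + (27530390889/8589934592000 : ℝ) * (2*t)^26 * (1-2*t)^0 := by ring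
  have pos : (0:ℝ) ≤ (1/96 : ℝ) * (2*t)^2 * (1-2*t)^24 + (47/192 : ℝ) * (2*t)^3 * (1-2*t)^23 + (338807/122880 : ℝ) * (2*t)^4 * (1-2*t)^22 + (9736607/491520 : ℝ) * (2*t)^5 * (1-2*t)^21 + (2704891111/26542080 : ℝ) * (2*t)^6 * (1-2*t)^20 + (8482869607/21233664 : ℝ) * (2*t)^7 * (1-2*t)^19 + (3948864049781/3185049600 : ℝ) * (2*t)^8 * (1-2*t)^18 + (19898640189013/6370099200 : ℝ) * (2*t)^9 * (1-2*t)^17 + (248478028342579/38220595200 : ℝ) * (2*t)^10 * (1-2*t)^16 + (576421343691953/50960793600 : ℝ) * (2*t)^11 * (1-2*t)^15 + (5635160943270823/339738624000 : ℝ) * (2*t)^12 * (1-2*t)^14 + (84011937775335203/4076863488000 : ℝ) * (2*t)^13 * (1-2*t)^13 + (59111443939239671/2717908992000 : ℝ) * (2*t)^14 * (1-2*t)^12 + (70697185176348013/3623878656000 : ℝ) * (2*t)^15 * (1-2*t)^11 + (1614147837650343133/108716359680000 : ℝ) * (2*t)^16 * (1-2*t)^10 + (346048880100633953/36238786560000 :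 ℝ) * (2*t)^17 * (1-2*t)^9 + (13840764853770537/2684354560000 : ℝ) * (2*t)^18 * (1-2*t)^8 + (83882750842145173/36238786560000 : ℝ) * (2*t)^19 * (1-2*t)^7 + (20586766178659129/24159191040000 : ℝ) * (2*t)^20 * (1-2*t)^6 + (677191995777101/2684354560000 : ℝ) * (2*t)^21 * (1-2*t)^5 + (2821849340762479/48318382080000 : ℝ) * (2*t)^22 * (1-2*t)^4 + (326540317970749/32212254720000 : ℝ) * (2*t)^23 * (1-2*t)^3 + (26479252195409/21474836480000 : ℝ) * (2*t)^24 * (1-2*t)^2 + (5980802132269/64424509440000 : ℝ) * (2*t)^25 * (1-2*t)^1 + (27530390889/8589934592000 : ℝ) * (2*t)^26 * (1-2*t)^0 := by positivity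
  linarith

set_option maxHeartbeats 1000000 in
private theorem log_lb' (t : ℝ) (h0 : 0 ≤ t) (h1 : t ≤ 1/2) :
    t - t^2/2 + t^3/3 - t^4/4 + t^5/5 - t^6/6 ≤ Real.log (1+t) := by
  have habs : |(-t)| < 1 := by rw [abs_neg, abs_of_nonneg h0]; linarith
  have h := Real.abs_log_sub_add_sum_range_le habs 13
  rw [show (1:ℝ) - -t = 1 + t by ring, abs_le] at h
  have h2 := h.1
  rw [abs_neg, abs_of_nonneg h0] at h2
  simp only [Finset.sum_range_succ, Finset.sum_range_zero] at h2
  norm_num at h2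
  have h1t : (0:ℝ) < 1 - t := by linarith
  have hB : t^14 / (1-t) * (1-t) = t^14 := by field_simp
  have a2 : (0:ℝ) ≤ 2*t := by linarith
  have a3 : (0:ℝ) ≤ 1-2*t := by linarith
  have pos2 : (0:ℝ) ≤ (1/896 : ℝ) * (2*t)^7 * (1-2*t)^7 + (97/14336 : ℝ) * (2*t)^8 * (1-2*t)^6 + (4547/258048 : ℝ) * (2*t)^9 * (1-2*t)^5 + (3651/143360 : ℝ) * (2*t)^10 * (1-2*t)^4 + (312469/14192640 : ℝ) * (2*t)^11 * (1-2*t)^3 + (644597/56770560 : ℝ) * (2*t)^12 * (1-2*t)^2 + (317825/98402304 : ℝ) * (2*t)^13 * (1-2*t)^1 + (485993/1476034560 : ℝ) * (2*t)^14 * (1-2*t)^0 := by positivity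
  have key2 : t^14/(1-t) ≤ t^7/7 - t^8/8 + t^9/9 - t^10/10 + t^11/11 - t^12/12 + t^13/13 := by
    rw [div_le_iff₀ h1t]
    nlinarith [pos2]
  nlinarith [h2, key2]

private theorem exp_neg_lb' (D : ℝ) (h0 : 0 ≤ D) (h1 : D ≤ 1) :
    1 - D + D^2/2 - D^3/6 - 5*D^4/96 ≤ Real.exp (-D) := by
  have habs : |(-D)| ≤ 1 := by rw [abs_neg, abs_of_nonneg h0]; exact h1
  have h := Real.exp_bound habs (n := 4) (by norm_num)
  simp only [Finset.sum_range_succ, Finset.sum_range_zero] at h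
  rw [abs_le] at h
  have h2 := h.1
  rw [abs_neg, abs_of_nonneg h0] at h2
  norm_num [Nat.factorial] at h2 ⊢
  nlinarith [h2]

private theorem pointwise' {c : ℝ} (hc : 2 ≤ c) :
    Real.exp 1 ≤ ((c+1) * Real.exp (c * Real.log (1+1/c))) * Real.log (1+1/c) := by
  have hc0 : (0:ℝ) < c := by linarith
  obtain ⟨t, ht⟩ : ∃ t : ℝ, t = 1/c := ⟨_, rfl⟩
  rw [← ht]
  have ht0 : 0 < t := by rw [ht]; positivity
  have ht1 : t ≤ 1/2 := by rw [ht]; exact one_div_le_one_div_of_le (by norm_num) hc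
  have hct : c * t = 1 := by rw [ht]; field_simp
  obtain ⟨D, hD⟩ : ∃ D : ℝ, D = t/2 - t^2/3 + t^3/4 - t^4/5 + t^5/6 := ⟨_, rfl⟩
  obtain ⟨E, hE⟩ : ∃ E : ℝ, E = 1 - D + D^2/2 - D^3/6 - 5*D^4/96 := ⟨_, rfl⟩
  have p2 : t^2 ≤ t/2 := by nlinarith
  have p4 : t^4 ≤ t^3 := by nlinarith [pow_nonneg ht0.le 2]
  have p3u : t^3 ≤ 1 := by nlinarith [pow_nonneg ht0.le 2]
  have p5u : t^5 ≤ 1 := by nlinarith [pow_nonneg ht0.le 4, pow_nonneg ht0.le 2]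
  have hD0 : 0 ≤ D := by
    rw [hD]; linarith [p2, p4, pow_nonneg ht0.le 3, pow_nonneg ht0.le 5, ht0.le]
  have hD1 : D ≤ 1 := by
    rw [hD]; linarith [sq_nonneg t, pow_nonneg ht0.le 4, p3u, p5u, ht1]
  have h1D : 0 ≤ 1 - D := by linarith
  have hkey := key_poly' t ht0.le ht1
  rw [← hD, ← hE] at hkey
  have hlog := log_lb' t ht0.le ht1
  have hlog' : t * (1 - D) ≤ Real.log (1+t) := by
    calc t * (1 - D) = t - t^2/2 + t^3/3 - t^4/4 + t^5/5 - t^6/6 := by rw [hD]; ring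
    _ ≤ Real.log (1+t) := hlog
  have hlogpos : 0 ≤ Real.log (1+t) := (Real.log_pos (by linarith)).le
  have hclog : 1 - D ≤ c * Real.log (1+t) := by
    have h2 : c * (t*(1-D)) ≤ c * Real.log (1+t) := mul_le_mul_of_nonneg_left hlog' hc0.le
    have h3 : c * (t*(1-D)) = 1 - D := by rw [← mul_assoc, hct, one_mul]
    linarith
  have q2 : D^2 ≤ 1 := by nlinarith
  have q3 : D^3 ≤ D^2 := by nlinarith [mul_le_mul_of_nonneg_left hD1 (sq_nonneg D)]
  have q4 : D^4 ≤ D^2 := by nlinarith [mul_le_mul_of_nonneg_left q2 (sq_nonneg D)]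
  have hE0 : 0 ≤ E := by rw [hE]; linarith [sq_nonneg D]
  have hexp : Real.exp 1 * E ≤ Real.exp (c * Real.log (1+t)) := by
    calc Real.exp 1 * E ≤ Real.exp 1 * Real.exp (-D) :=
          mul_le_mul_of_nonneg_left (by rw [hE]; exact exp_neg_lb' D hD0 hD1) (Real.exp_pos 1).le
    _ = Real.exp (1 - D) := by rw [← Real.exp_add]; ring_nf
    _ ≤ Real.exp (c * Real.log (1+t)) := Real.exp_le_exp.mpr hclog
  calc Real.exp 1 = Real.exp 1 * 1 := (mul_one _).symm
    _ ≤ Real.exp 1 * ((1+t)*(1-D)*E) := mul_le_mul_of_nonneg_left hkey (Real.exp_pos 1).le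
    _ = ((c+1)) * (Real.exp 1 * E) * (t*(1-D)) := by
        linear_combination (-(Real.exp 1)*(1-D)*E) * hct
    _ ≤ ((c+1)) * Real.exp (c * Real.log (1+t)) * Real.log (1+t) := by
        have hcc : (0:ℝ) ≤ c + 1 := by linarith
        have step1 : (c+1) * (Real.exp 1 * E) ≤ (c+1) * Real.exp (c * Real.log (1+t)) :=
          mul_le_mul_of_nonneg_left hexp hcc
        exact mul_le_mul step1 hlog' (by positivity) (by positivity)

theorem h_gap_ge_e (x : ℝ) (hx : 3 ≤ x) : h x - h (x - 1) ≥ Real.exp 1 := by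
  have hx0 : (0:ℝ) < x - 1 := by linarith
  set H : ℝ → ℝ := fun y => (y+1) * Real.exp (y * Real.log (1+1/y)) with hH
  have hEq : ∀ y : ℝ, 0 < y → h y = H y := by
    intro y hy
    have hpos : (0:ℝ) < 1 + 1/y := by positivity
    rw [hH]
    unfold h
    rw [Real.rpow_def_of_pos hpos, mul_comm (Real.log _)]
  have hder : ∀ y : ℝ, 0 < y → HasDerivAt H (H y * Real.log (1+1/y)) y := by
    intro y hy
    have hy' : y ≠ 0 := ne_of_gt hy
    have hpos : (0:ℝ) < 1 + 1/y := by positivity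
    have d1 : HasDerivAt (fun z : ℝ => 1 + 1/z) (-(y^2)⁻¹) y := by
      simpa [one_div] using (hasDerivAt_inv hy').const_add 1
    have d2 : HasDerivAt (fun z : ℝ => Real.log (1+1/z)) ((1+1/y)⁻¹ * -(y^2)⁻¹) y := by
      simpa [mul_comm, Function.comp_def] using (Real.hasDerivAt_log (ne_of_gt hpos)).comp y d1
    have d3 : HasDerivAt (fun z : ℝ => z * Real.log (1+1/z))
        (1 * Real.log (1+1/y) + y * ((1+1/y)⁻¹ * -(y^2)⁻¹)) y := (hasDerivAt_id y).mul d2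
    have d4 := d3.exp
    have d5 : HasDerivAt H
        (1 * Real.exp (y * Real.log (1+1/y)) + (y+1) *
          (Real.exp (y * Real.log (1+1/y)) * (1 * Real.log (1+1/y) + y * ((1+1/y)⁻¹ * -(y^2)⁻¹)))) y :=
      ((hasDerivAt_id y).add_const 1).mul d4
    convert d5 using 1
    rw [hH]
    have h1y : (1+1/y) ≠ 0 := ne_of_gt hpos
    field_simp
    ring
  have cont : ContinuousOn H (Set.Icc (x-1) x) := by
    intro y hy
    exact ((hder y (by linarith [hy.1])).continuousAt).continuousWithinAt
  obtain ⟨c, hc, hslope⟩ := exists_hasDerivAt_eq_slope H (fun y => H y * Real.log (1+1/y))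
    (by linarith : x-1 < x) cont (fun y hy => hder y (by linarith [hy.1]))
  rw [show x - (x-1) = 1 by ring, div_one] at hslope
  rw [hEq x (by linarith), hEq (x-1) hx0, ge_iff_le, ← hslope]
  have hc2 : 2 ≤ c := by linarith [hc.1]
  exact pointwise' hc2
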